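/- For the endomorphism f_m above, the Magnus matrix r(f_m^acy) = (conjugate of ∂f_m(γ_j)/∂γ_i)_{ij} over the fraction field K_{H₁} is lower triangular with diagonal entries (1 - γ₂ + γ₂² - ... + γ₂^{2m}, 1, 1, ..., 1); consequently det r(f_m^acy) = 1 - γ₂ + ... + γ₂^{2m}. -/

import Mathlib

/-- The Laurent polynomial ring `ℤ[H₁] = ℤ[γ₁^{±1}, …, γ_n^{±1}]`. -/
abbrev LaurentRing (n : ℕ) : Type := AddMonoidAlgebra ℤ (Fin n →₀ ℤ)

/-- The monomial `γ^x` attached to `x ∈ H₁ = ℤⁿ`. -/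
noncomputable def monoR (n : ℕ) (x : Fin n →₀ ℤ) : LaurentRing n :=
  AddMonoidAlgebra.single x 1

lemma geom_aux {R : Type*} [CommRing R] (m : ℕ) (x : R) :
    (∑ j ∈ Finset.range m, (x ^ 2) ^ j) * (1 - x) + x ^ (2 * m)
      = ∑ k ∈ Finset.range (2 * m + 1), (-1 : R) ^ k * x ^ k := by
  induction m with
  | zero => simp
  | succ p ih =>
    have h2 : 2 * (p + 1) + 1 = (2 * p + 1) + 1 + 1 := by ring
    rw [Finset.sum_range_succ, add_mul, h2, Finset.sum_range_succ, Finset.sum_range_succ, ← ih]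
    have hodd : (-1 : R) ^ (2 * p + 1) = -1 := by
      simp [pow_succ, pow_mul]
    have heven : (-1 : R) ^ (2 * p + 1 + 1) = 1 := by
      simp [pow_succ, pow_mul]
    rw [hodd, heven]
    ring

/-- For the endomorphism `f_m` of `F_n` (`n ≥ 2`) with
`f_m(γ₁) = (γ₁γ₂⁻¹γ₁⁻¹γ₂⁻¹)^m γ₁ γ₂^{2m}` and `f_m(γⱼ) = γⱼ` for `j ≥ 2`, the Magnus
matrix `r(f_m^acy) = (σ(∂f_m(γⱼ)/∂γᵢ))_{ij}` is lower triangular with diagonal entries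
`(1 - γ₂ + ⋯ + γ₂^{2m}, 1, …, 1)`; consequently `det r(f_m^acy) = 1 - γ₂ + ⋯ + γ₂^{2m}`.
Here `d i` is the Fox derivative `∂/∂γᵢ` pushed to `ℤ[H₁]` (base case `d i (γⱼ) = δᵢⱼ`,
product rule with `ε` the abelianization-monomial map) and `σ` is the involution. -/
theorem magnus_matrix_fm (n m : ℕ) (hn : 2 ≤ n)
    (ε : FreeGroup (Fin n) →* (LaurentRing n)ˣ)
    (hε : ∀ j : Fin n, (ε (FreeGroup.of j) : LaurentRing n) = monoR n (Finsupp.single j 1))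
    (σ : LaurentRing n ≃+* LaurentRing n)
    (hσ : ∀ x : Fin n →₀ ℤ, σ (monoR n x) = monoR n (-x))
    (d : Fin n → FreeGroup (Fin n) → LaurentRing n)
    (hbase : ∀ i j : Fin n, d i (FreeGroup.of j) = if i = j then 1 else 0)
    (hprod : ∀ (i : Fin n) (u v : FreeGroup (Fin n)),
      d i (u * v) = d i u + (ε u : LaurentRing n) * d i v)
    (fm : Fin n → FreeGroup (Fin n))
    (hfm0 : fm (⟨0, by omega⟩ : Fin n)
      = (FreeGroup.of (⟨0, by omega⟩ : Fin n) * (FreeGroup.of (⟨1, by omega⟩ : Fin n))⁻¹ *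
          (FreeGroup.of (⟨0, by omega⟩ : Fin n))⁻¹ * (FreeGroup.of (⟨1, by omega⟩ : Fin n))⁻¹) ^ m *
          FreeGroup.of (⟨0, by omega⟩ : Fin n) *
          (FreeGroup.of (⟨1, by omega⟩ : Fin n)) ^ (2 * m))
    (hfm : ∀ j : Fin n, j ≠ (⟨0, by omega⟩ : Fin n) → fm j = FreeGroup.of j)
    (M : Matrix (Fin n) (Fin n) (LaurentRing n))
    (hM : ∀ i j : Fin n, M i j = σ (d i (fm j))) :
    (∀ i j : Fin n, i < j → M i j = 0) ∧
    (M (⟨0, by omega⟩ : Fin n) (⟨0, by omega⟩ : Fin n)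
      = ∑ k ∈ Finset.range (2 * m + 1),
          AddMonoidAlgebra.single (Finsupp.single (⟨1, by omega⟩ : Fin n) (k : ℤ))
            ((-1 : ℤ) ^ k)) ∧
    (∀ j : Fin n, j ≠ (⟨0, by omega⟩ : Fin n) → M j j = 1) ∧
    M.det = ∑ k ∈ Finset.range (2 * m + 1),
        AddMonoidAlgebra.single (Finsupp.single (⟨1, by omega⟩ : Fin n) (k : ℤ))
          ((-1 : ℤ) ^ k) := by
  set i0 : Fin n := ⟨0, by omega⟩ with hi0
  set i1 : Fin n := ⟨1, by omega⟩ with hi1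
  have hne : i0 ≠ i1 := by simp [hi0, hi1, Fin.ext_iff]
  -- basic Fox calculus
  have hd1 : ∀ i, d i 1 = 0 := by
    intro i
    have h := hprod i 1 1
    simp only [one_mul, map_one, Units.val_one, left_eq_add] at h
    exact h
  have hinv : ∀ (i : Fin n) (u : FreeGroup (Fin n)),
      d i u⁻¹ = -((ε u⁻¹ : LaurentRing n) * d i u) := by
    intro i u
    have h := hprod i u⁻¹ u
    rw [inv_mul_cancel, hd1] at h
    linear_combination -h
  have hpow : ∀ (i : Fin n) (u : FreeGroup (Fin n)) (k : ℕ),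
      d i (u ^ k) = (∑ j ∈ Finset.range k, ((ε u : LaurentRing n)) ^ j) * d i u := by
    intro i u k
    induction k with
    | zero => simp [hd1]
    | succ p ih =>
      rw [pow_succ, hprod, ih, Finset.sum_range_succ, map_pow, Units.val_pow_eq_pow_val]
      ring
  -- off-diagonal/diagonal entries for j ≠ i0
  have hMj : ∀ i j : Fin n, j ≠ i0 → M i j = if i = j then 1 else 0 := by
    intro i j hj
    rw [hM, hfm j hj, hbase]
    split <;> simp
  have h1 : ∀ i j : Fin n, i < j → M i j = 0 := by
    intro i j hij
    have hj : j ≠ i0 := by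
      intro h
      rw [h] at hij
      exact absurd hij (by simp [hi0, Fin.lt_def])
    rw [hMj i j hj, if_neg (by exact fun h => absurd h (by rintro rfl; exact lt_irrefl _ hij))]
  have h3 : ∀ j : Fin n, j ≠ i0 → M j j = 1 := by
    intro j hj
    rw [hMj j j hj, if_pos rfl]
  -- the main entry
  set a : FreeGroup (Fin n) := FreeGroup.of i0 with ha
  set b : FreeGroup (Fin n) := FreeGroup.of i1 with hb
  set t : LaurentRing n := monoR n (Finsupp.single i1 1) with ht
  set s : LaurentRing n := monoR n (Finsupp.single i1 (-1)) with hs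
  have hts : t * s = 1 := by
    rw [ht, hs]
    simp [monoR, AddMonoidAlgebra.single_mul_single, AddMonoidAlgebra.one_def]
  have hEb : (ε b : LaurentRing n) = t := by rw [hb, hε]
  have hEbinv : (ε b⁻¹ : LaurentRing n) = s := by
    rw [map_inv]
    exact Units.inv_eq_of_mul_eq_one_right (by rw [hEb]; exact hts)
  have hEa : (ε a : LaurentRing n) * (ε a⁻¹ : LaurentRing n) = 1 := by
    rw [← Units.val_mul, ← map_mul]
    simp
  have hda : d i0 a = 1 := by rw [ha, hbase, if_pos rfl]
  have hdb : d i0 b = 0 := by rw [hb, hbase, if_neg hne]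
  have hdbinv : d i0 b⁻¹ = 0 := by rw [hinv, hdb, mul_zero, neg_zero]
  have hdainv : d i0 a⁻¹ = -((ε a⁻¹ : LaurentRing n) * 1) := by rw [hinv, hda]
  set c : FreeGroup (Fin n) := a * b⁻¹ * a⁻¹ * b⁻¹ with hc
  have hdc : d i0 c = 1 - s := by
    rw [hc, hprod, hprod, hprod, hda, hdbinv, hdainv]
    have h1' : (ε (a * b⁻¹) : LaurentRing n) = (ε a : LaurentRing n) * s := by
      rw [map_mul, Units.val_mul, hEbinv]
    rw [h1']
    linear_combination (-s) * hEa
  have hEc : (ε c : LaurentRing n) = s ^ 2 := by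
    rw [hc, map_mul, map_mul, map_mul, Units.val_mul, Units.val_mul, Units.val_mul,
      hEbinv]
    calc (ε a : LaurentRing n) * s * (ε a⁻¹ : LaurentRing n) * s
        = s ^ 2 * ((ε a : LaurentRing n) * (ε a⁻¹ : LaurentRing n)) := by ring
      _ = s ^ 2 := by rw [hEa, mul_one]
  have key : d i0 (fm i0) = ∑ k ∈ Finset.range (2 * m + 1), (-1 : LaurentRing n) ^ k * s ^ k := by
    rw [hfm0]
    rw [hprod, hprod, hpow i0 b, hdb, hpow i0 c, hdc, hda, map_pow,
      Units.val_pow_eq_pow_val, hEc]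
    linear_combination geom_aux m s
  -- per-k monomial identity
  have hk : ∀ k : ℕ, (-1 : LaurentRing n) ^ k * t ^ k
      = AddMonoidAlgebra.single (Finsupp.single i1 (k : ℤ)) ((-1 : ℤ) ^ k) := by
    intro k
    rw [ht, monoR, AddMonoidAlgebra.single_pow]
    have hsm : k • Finsupp.single i1 (1 : ℤ) = Finsupp.single i1 (k : ℤ) := by
      rw [Finsupp.smul_single]
      norm_num
    rw [hsm, one_pow]
    have hneg : (-1 : LaurentRing n) ^ k
        = AddMonoidAlgebra.single (0 : Fin n →₀ ℤ) ((-1 : ℤ) ^ k) := by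
      have h1 : (-1 : LaurentRing n) = AddMonoidAlgebra.single (0 : Fin n →₀ ℤ) (-1 : ℤ) := by
        rw [AddMonoidAlgebra.one_def]
        exact (AddMonoidAlgebra.single_neg _ _).symm
      rw [h1, AddMonoidAlgebra.single_pow, smul_zero]
    rw [hneg, AddMonoidAlgebra.single_mul_single, zero_add, mul_one]
  have h2 : M i0 i0 = ∑ k ∈ Finset.range (2 * m + 1),
      AddMonoidAlgebra.single (Finsupp.single i1 (k : ℤ)) ((-1 : ℤ) ^ k) := by
    rw [hM, key, map_sum]
    refine Finset.sum_congr rfl fun k _ => ?_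
    rw [map_mul, map_pow, map_neg, map_one, map_pow, hs, hσ]
    have : -Finsupp.single i1 (-1 : ℤ) = Finsupp.single i1 (1 : ℤ) := by
      rw [← Finsupp.single_neg]; norm_num
    rw [this, ← ht, hk]
  refine ⟨h1, h2, h3, ?_⟩
  have hdet : M.det = ∏ i, M i i := by
    apply Matrix.det_of_lowerTriangular
    intro i j hij
    exact h1 i j hij
  rw [hdet, Fintype.prod_eq_single i0 (fun j hj => h3 j hj), h2]
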